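/- Of any six distinct rays emanating from a common point in the Euclidean plane, at least two make an angle of at most π/3 with each other. -/

import Mathlib

open Real RealInnerProductSpace

private lemma arccos_cos_le_third {x : ℝ} (h : |x| ≤ π / 3) :
    Real.arccos (Real.cos x) ≤ π / 3 := by
  have hπ := Real.pi_pos
  rw [← Real.cos_abs, Real.arccos_cos (abs_nonneg x) (h.trans (by linarith))]
  exact h

private lemma bucket_close {x y : ℝ}
    (hb : (if x ≤ 2*π/3 then (0:Fin 4) else if x ≤ π then 1 else if x ≤ 4*π/3 then 2 else 3)
        = (if y ≤ 2*π/3 then 0 else if y ≤ π then 1 else if y ≤ 4*π/3 then 2 else 3))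
    (hx1 : π/3 < x) (hx2 : x < 5*π/3) (hy1 : π/3 < y) (hy2 : y < 5*π/3) :
    |x - y| ≤ π/3 := by
  rw [abs_le]
  split_ifs at hb <;>
    first
      | exact absurd hb (by decide)
      | (constructor <;> linarith)

theorem stmt_5 (u : Fin 6 → EuclideanSpace ℝ (Fin 2))
    (hunit : ∀ i, ‖u i‖ = 1) (hinj : Function.Injective u) :
    ∃ i j, i ≠ j ∧ InnerProductGeometry.angle (u i) (u j) ≤ Real.pi / 3 := by
  have hπ := Real.pi_pos
  set v : Fin 6 → ℂ := fun i => ⟨u i 0, u i 1⟩ with hv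
  have hsq : ∀ i, u i 0 * u i 0 + u i 1 * u i 1 = 1 := by
    intro i
    have h := hunit i
    rw [EuclideanSpace.norm_eq, Fin.sum_univ_two, Real.sqrt_eq_one] at h
    simp only [Real.norm_eq_abs, sq_abs] at h
    nlinarith [h]
  have habs : ∀ i, ‖v i‖ = 1 := by
    intro i
    rw [Complex.norm_def, Complex.normSq_mk, hsq i, Real.sqrt_one]
  have hne : ∀ i, v i ≠ 0 := by
    intro i h
    have := habs i
    rw [h] at this
    simp at this
  set θ : Fin 6 → ℝ := fun i => Complex.arg (v i) with hθ
  have hcos : ∀ i, Real.cos (θ i) = u i 0 := by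
    intro i; rw [hθ, Complex.cos_arg (hne i), habs i, div_one]
  have hsin : ∀ i, Real.sin (θ i) = u i 1 := by
    intro i; rw [hθ, Complex.sin_arg, habs i, div_one]
  have hinner : ∀ i j, (inner ℝ (u i) (u j) : ℝ) = Real.cos (θ i - θ j) := by
    intro i j
    rw [Real.cos_sub, hcos, hcos, hsin, hsin]
    simp [PiLp.inner_apply, Fin.sum_univ_two]
    ring
  have hangle : ∀ i j, InnerProductGeometry.angle (u i) (u j)
      = Real.arccos (Real.cos (θ i - θ j)) := by
    intro i j
    rw [InnerProductGeometry.angle, hinner, hunit, hunit, one_mul, div_one]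
  -- normalized angles relative to θ 0
  set ψ : Fin 6 → ℝ := fun i => θ i - θ 0 + (if θ i - θ 0 < 0 then 2 * π else 0) with hψ
  have hψ0 : ψ 0 = 0 := by simp [hψ]
  have hψrange : ∀ i, 0 ≤ ψ i ∧ ψ i < 2 * π := by
    intro i
    have h1 := Complex.neg_pi_lt_arg (v i)
    have h2 := Complex.arg_le_pi (v i)
    have h3 := Complex.neg_pi_lt_arg (v 0)
    have h4 := Complex.arg_le_pi (v 0)
    simp only [hψ]
    split_ifs with h <;> constructor <;> (try push_neg at *) <;> simp only [hθ] at * <;> linarith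
  have hcosψ : ∀ i j, Real.cos (ψ i - ψ j) = Real.cos (θ i - θ j) := by
    intro i j
    simp only [hψ]
    split_ifs with h1 h2 h2
    · rw [show θ i - θ 0 + 2 * π - (θ j - θ 0 + 2 * π) = θ i - θ j from by ring]
    · rw [show θ i - θ 0 + 2 * π - (θ j - θ 0 + 0) = θ i - θ j + 2 * π from by ring,
        Real.cos_add_two_pi]
    · rw [show θ i - θ 0 + 0 - (θ j - θ 0 + 2 * π) = θ i - θ j - 2 * π from by ring,
        Real.cos_sub_two_pi]
    · rw [show θ i - θ 0 + 0 - (θ j - θ 0 + 0) = θ i - θ j from by ring]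
  have hangle' : ∀ i j, InnerProductGeometry.angle (u i) (u j)
      = Real.arccos (Real.cos (ψ i - ψ j)) := by
    intro i j; rw [hangle, hcosψ]
  -- case 1: some ψ i ≤ π/3 with i ≠ 0
  by_cases hlow : ∃ i, i ≠ 0 ∧ ψ i ≤ π / 3
  · obtain ⟨i, hi0, hle⟩ := hlow
    refine ⟨0, i, (Ne.symm hi0), ?_⟩
    rw [hangle']
    apply arccos_cos_le_third
    rw [hψ0, zero_sub, abs_neg, abs_of_nonneg (hψrange i).1]
    exact hle
  by_cases hhigh : ∃ i, i ≠ 0 ∧ 5 * π / 3 ≤ ψ i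
  · obtain ⟨i, hi0, hge⟩ := hhigh
    refine ⟨0, i, (Ne.symm hi0), ?_⟩
    rw [hangle']
    rw [hψ0, zero_sub, Real.cos_neg,
      show ψ i = (ψ i - 2 * π) + 2 * π by ring, Real.cos_add_two_pi]
    apply arccos_cos_le_third
    have := (hψrange i).2
    rw [abs_of_nonpos (by linarith)]
    linarith
  -- remaining: all ψ (i ≠ 0) in (π/3, 5π/3); pigeonhole into 4 buckets
  push_neg at hlow hhigh
  set f : Fin 5 → Fin 4 := fun k =>
    if ψ k.succ ≤ 2*π/3 then 0
    else if ψ k.succ ≤ π then 1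
    else if ψ k.succ ≤ 4*π/3 then 2
    else 3 with hf
  have hcard : Fintype.card (Fin 4) < Fintype.card (Fin 5) := by simp
  obtain ⟨a, b, hab, hfab⟩ := Fintype.exists_ne_map_eq_of_card_lt f hcard
  have ha0 : (a.succ : Fin 6) ≠ 0 := Fin.succ_ne_zero a
  have hb0 : (b.succ : Fin 6) ≠ 0 := Fin.succ_ne_zero b
  have hla := hlow a.succ ha0
  have hlb := hlow b.succ hb0
  have hha := hhigh a.succ ha0
  have hhb := hhigh b.succ hb0
  refine ⟨a.succ, b.succ, fun h => hab (Fin.succ_injective _ h), ?_⟩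
  rw [hangle']
  apply arccos_cos_le_third
  simp only [hf] at hfab
  exact bucket_close hfab hla hha hlb hhb
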